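/- arXiv:1504.03121 — 2 statements merged into one kernel-verified Lean document; each statement's English description precedes it below -/
import Mathlib

section
/- Let q be a prime, ξ a primitive q-th root of unity, λ = 1-ξ, and 1 ≤ k ≤ q-1. Then 1 - ξ^k = λ·k·(1 - ((k-1)/2)·λ + r) where r ∈ λ²·ℤ_{(q)}[λ]; more precisely, 1 - (1-λ)^k = λk·∑_{j=0}^{k-1} binom(k-1, j)·(-λ)^j/(j+1), and every coefficient binom(k-1,j)/(j+1) lies in ℤ localized at (q). -/
theorem stmt6 (q k : ℕ) (hq : q.Prime) (hk : 1 ≤ k) (hk' : k ≤ q - 1) :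
    (∀ lam : ℂ, 1 - (1 - lam) ^ k =
      lam * k * ∑ j ∈ Finset.range k,
        (Nat.choose (k - 1) j : ℂ) * (-lam) ^ j / (j + 1)) ∧
    (∀ j < k, ∃ a b : ℤ, b ≠ 0 ∧ ¬ ((q : ℤ) ∣ b) ∧
      (Nat.choose (k - 1) j : ℚ) / (j + 1) = (a : ℚ) / (b : ℚ)) := by
  constructor
  · intro lam
    have key : ∀ j ∈ Finset.range k,
        lam * k * ((Nat.choose (k - 1) j : ℂ) * (-lam) ^ j / (j + 1)) =
        lam * (-lam) ^ j * (Nat.choose k (j + 1) : ℂ) := by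
      intro j _
      have hj : ((j : ℂ) + 1) ≠ 0 := Nat.cast_add_one_ne_zero j
      have hnat : k * Nat.choose (k - 1) j = Nat.choose k (j + 1) * (j + 1) := by
        have := Nat.add_one_mul_choose_eq (k - 1) j
        rwa [Nat.sub_add_cancel hk] at this
      have hcast : (k : ℂ) * (Nat.choose (k - 1) j : ℂ) =
          (Nat.choose k (j + 1) : ℂ) * ((j : ℂ) + 1) := by
        exact_mod_cast congrArg (Nat.cast (R := ℂ)) hnat
      rw [show lam * k * ((Nat.choose (k - 1) j : ℂ) * (-lam) ^ j / (j + 1)) =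
          (k : ℂ) * (Nat.choose (k - 1) j : ℂ) * (lam * (-lam) ^ j) / ((j : ℂ) + 1) by ring,
        hcast]
      field_simp
    rw [Finset.mul_sum, Finset.sum_congr rfl key]
    have expand : (1 - lam) ^ k =
        ∑ i ∈ Finset.range (k + 1), (-lam) ^ i * (Nat.choose k i : ℂ) := by
      rw [show (1 : ℂ) - lam = -lam + 1 by ring, add_pow]
      simp
    rw [expand, Finset.sum_range_succ']
    simp only [pow_zero, Nat.choose_zero_right, Nat.cast_one, one_mul]
    rw [show (1 : ℂ) - (∑ j ∈ Finset.range k, (-lam) ^ (j + 1) * (Nat.choose k (j + 1) : ℂ) + 1)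
        = ∑ j ∈ Finset.range k, -((-lam) ^ (j + 1) * (Nat.choose k (j + 1) : ℂ)) by
      rw [Finset.sum_neg_distrib]; ring]
    exact Finset.sum_congr rfl fun j _ => by ring
  · intro j hj
    refine ⟨Nat.choose (k - 1) j, j + 1, by positivity, ?_, by push_cast; ring⟩
    intro hdvd
    have h2 : q ∣ j + 1 := by exact_mod_cast hdvd
    have := Nat.le_of_dvd (by omega) h2
    have hq2 := hq.two_le
    omega
end

section
/- Let q ≥ 5 be prime, ξ a primitive q-th root of unity, λ = 1 - ξ. For 1 ≤ k ≤ q-1 and any integer l, write ξ^l·λ/(1-ξ^k) as an element of ℤ[ξ]. Then ξ^l·λ/(1-ξ^k) ≡ k* (mod λ), where k* ∈ {1,…,q-1} is the inverse of k modulo q; equivalently, ξ^l·λ/(1-ξ^k) - k* lies in the ideal (λ) of ℤ[ξ]. -/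
theorem stmt17 (q : ℕ) (hq : q.Prime) (hq5 : 5 ≤ q)
    (ξ : ℂ) (hξ : ξ = Complex.exp (2 * Real.pi * Complex.I / q))
    (k kstar : ℕ) (hk : 1 ≤ k) (hk' : k ≤ q - 1)
    (hks : 1 ≤ kstar) (hks' : kstar ≤ q - 1)
    (hkk : k * kstar ≡ 1 [MOD q]) (l : ℤ) :
    ∃ z ∈ Algebra.adjoin ℤ {ξ},
      ξ ^ l * (1 - ξ) / (1 - ξ ^ k) - (kstar : ℂ) = (1 - ξ) * z := by
  have hq0 : q ≠ 0 := hq.ne_zero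
  have hprim : IsPrimitiveRoot ξ q := by
    rw [hξ]; exact Complex.isPrimitiveRoot_exp q hq0
  have hξq : ξ ^ q = 1 := hprim.pow_eq_one
  have hξ0 : ξ ≠ 0 := by
    intro h; rw [h] at hξq; simpa [zero_pow hq0] using hξq
  have hkq : k < q := lt_of_le_of_lt hk' (Nat.sub_lt hq.pos one_pos)
  have hne : (1 : ℂ) - ξ ^ k ≠ 0 := by
    have := hprim.pow_ne_one_of_pos_of_lt (Nat.one_le_iff_ne_zero.mp hk) hkq
    intro h
    apply this
    linear_combination -h
  -- ξ^(k*kstar) = ξ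
  have hkk' : ξ ^ (k * kstar) = ξ := by
    obtain ⟨t, ht⟩ : ∃ t, k * kstar = q * t + 1 := by
      have h1 : k * kstar % q = 1 := by
        have h2 : 1 % q = 1 := Nat.mod_eq_of_lt (by omega)
        have h3 : k * kstar % q = 1 % q := hkk
        rw [h3, h2]
      exact ⟨k * kstar / q, by rw [← h1]; exact (Nat.div_add_mod _ q).symm⟩
    rw [ht, pow_add, pow_mul, hξq, one_pow, pow_one, one_mul]
  -- geometric sum S
  set S : ℂ := ∑ j ∈ Finset.range kstar, (ξ ^ k) ^ j with hS
  have hgeo : (1 - ξ ^ k) * S = 1 - ξ := by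
    have := geom_sum_mul (ξ ^ k) kstar
    rw [← pow_mul, hkk'] at this
    linear_combination -this
  -- reduce exponent
  set m : ℕ := (l % (q : ℤ)).toNat with hm
  have hlm : ξ ^ l = ξ ^ m := by
    have h1 : (l % (q : ℤ)) + (q : ℤ) * (l / (q : ℤ)) = l := Int.emod_add_mul_ediv l q
    have h2 : ξ ^ l = ξ ^ (l % (q : ℤ)) * (ξ ^ (q : ℤ)) ^ (l / (q : ℤ)) := by
      rw [← zpow_mul, ← zpow_add₀ hξ0, h1]
    have h3 : ξ ^ (q : ℤ) = 1 := by rw [zpow_natCast]; exact hξq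
    have h4 : (0 : ℤ) ≤ l % (q : ℤ) := Int.emod_nonneg l (by exact_mod_cast hq0)
    rw [h2, h3, one_zpow, mul_one, ← Int.toNat_of_nonneg h4, zpow_natCast]
  -- the element z
  refine ⟨∑ j ∈ Finset.range kstar, -(∑ i ∈ Finset.range (m + k * j), ξ ^ i), ?_, ?_⟩
  · apply Subalgebra.sum_mem
    intro j _
    apply Subalgebra.neg_mem
    apply Subalgebra.sum_mem
    intro i _
    exact Subalgebra.pow_mem _ (Algebra.self_mem_adjoin_singleton ℤ ξ) i
  · have hdiv : ξ ^ l * (1 - ξ) / (1 - ξ ^ k) = ξ ^ m * S := by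
      rw [hlm, ← hgeo]
      field_simp
    have hterm : ∀ j ∈ Finset.range kstar,
        (1 - ξ) * -(∑ i ∈ Finset.range (m + k * j), ξ ^ i)
          = ξ ^ m * (ξ ^ k) ^ j - 1 := by
      intro j _
      have := geom_sum_mul ξ (m + k * j)
      rw [pow_add, pow_mul] at this
      linear_combination this
    have hR : (1 - ξ) * ∑ j ∈ Finset.range kstar, -(∑ i ∈ Finset.range (m + k * j), ξ ^ i)
        = ξ ^ m * S - kstar := by
      rw [Finset.mul_sum, Finset.sum_congr rfl hterm, Finset.sum_sub_distrib,
        Finset.sum_const, Finset.card_range, nsmul_eq_mul, mul_one, hS, Finset.mul_sum]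
    rw [hdiv, ← hR]
end
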